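/- arXiv:1201.0099 — 4 statements merged into one kernel-verified Lean document; each statement's English description precedes it below -/
import Mathlib

section
/- Let E₁ = C/Λ₁ and E₂ = C/Λ₂ be elliptic curves and (a,b) ∈ C² \ {(0,0)}. Then the map ψ(u + Λ₁, v + Λ₂) = bu − av + (aΛ₂ + bΛ₁) is a well-defined surjective group homomorphism from E₁ × E₂ to F' = C/(aΛ₂ + bΛ₁), and its kernel is the elliptic curve F = {(at + Λ₁, bt + Λ₂) : t ∈ C} through the origin with slope vector (a,b). In particular F = {(u + Λ₁, v + Λ₂) : bu − av ∈ aΛ₂ + bΛ₁}. -/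
/-- A rank-2 discrete additive subgroup (lattice) of `ℂ`. -/
def IsLattice (Λ : AddSubgroup ℂ) : Prop :=
  Nonempty (Λ ≃ₗ[ℤ] (Fin 2 → ℤ)) ∧ DiscreteTopology Λ

/-- for elliptic curves `E₁ = ℂ/Λ₁`, `E₂ = ℂ/Λ₂` and `(a,b) ≠ (0,0)`, the map
`ψ(u+Λ₁, v+Λ₂) = bu - av + (aΛ₂ + bΛ₁)` is a well-defined surjective homomorphism
`E₁ × E₂ → ℂ/(aΛ₂ + bΛ₁)` whose kernel is the slope-`(a,b)` elliptic curve
`F = {(at+Λ₁, bt+Λ₂) : t ∈ ℂ} = {(u+Λ₁, v+Λ₂) : bu - av ∈ aΛ₂ + bΛ₁}` through the origin. -/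
theorem slope_curve_as_kernel (Λ₁ Λ₂ : AddSubgroup ℂ) (h1 : IsLattice Λ₁) (h2 : IsLattice Λ₂)
    (a b : ℂ) (hab : (a, b) ≠ ((0 : ℂ), (0 : ℂ))) :
    ∃ ψ : (ℂ ⧸ Λ₁) × (ℂ ⧸ Λ₂) →+
        ℂ ⧸ (Λ₂.map (AddMonoidHom.mulLeft a) ⊔ Λ₁.map (AddMonoidHom.mulLeft b)),
      (∀ u v : ℂ,
        ψ (QuotientAddGroup.mk u, QuotientAddGroup.mk v) = QuotientAddGroup.mk (b * u - a * v)) ∧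
      Function.Surjective ψ ∧
      (∀ u v : ℂ,
        (QuotientAddGroup.mk u, QuotientAddGroup.mk v) ∈ ψ.ker
          ↔ ∃ t : ℂ, u - a * t ∈ Λ₁ ∧ v - b * t ∈ Λ₂) ∧
      (∀ u v : ℂ,
        (QuotientAddGroup.mk u, QuotientAddGroup.mk v) ∈ ψ.ker
          ↔ b * u - a * v ∈ Λ₂.map (AddMonoidHom.mulLeft a) ⊔ Λ₁.map (AddMonoidHom.mulLeft b)) := by
  set M := Λ₂.map (AddMonoidHom.mulLeft a) ⊔ Λ₁.map (AddMonoidHom.mulLeft b) with hM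
  have hbM : ∀ x ∈ Λ₁, b * x ∈ M := fun x hx =>
    AddSubgroup.mem_sup_right ⟨x, hx, rfl⟩
  have haM : ∀ x ∈ Λ₂, a * x ∈ M := fun x hx =>
    AddSubgroup.mem_sup_left ⟨x, hx, rfl⟩
  let f₁ : (ℂ ⧸ Λ₁) →+ ℂ ⧸ M :=
    QuotientAddGroup.lift Λ₁ ((QuotientAddGroup.mk' M).comp (AddMonoidHom.mulLeft b))
      (fun x hx => (QuotientAddGroup.eq_zero_iff _).2 (hbM x hx))
  let f₂ : (ℂ ⧸ Λ₂) →+ ℂ ⧸ M :=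
    QuotientAddGroup.lift Λ₂ ((QuotientAddGroup.mk' M).comp (AddMonoidHom.mulLeft a))
      (fun x hx => (QuotientAddGroup.eq_zero_iff _).2 (haM x hx))
  set ψ : (ℂ ⧸ Λ₁) × (ℂ ⧸ Λ₂) →+ ℂ ⧸ M :=
    f₁.comp (AddMonoidHom.fst _ _) - f₂.comp (AddMonoidHom.snd _ _) with hψ
  have happ : ∀ u v : ℂ, ψ (QuotientAddGroup.mk u, QuotientAddGroup.mk v)
      = (QuotientAddGroup.mk (b * u - a * v) : ℂ ⧸ M) := by
    intro u v
    rw [hψ]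
    simp only [AddMonoidHom.sub_apply, AddMonoidHom.coe_comp, Function.comp_apply,
      AddMonoidHom.coe_fst, AddMonoidHom.coe_snd, f₁, f₂, QuotientAddGroup.lift_mk,
      QuotientAddGroup.mk'_apply, AddMonoidHom.coe_mulLeft]
    rw [QuotientAddGroup.mk_sub]; rfl
  have hker : ∀ u v : ℂ, ((QuotientAddGroup.mk u, QuotientAddGroup.mk v) ∈ ψ.ker
      ↔ b * u - a * v ∈ M) := by
    intro u v
    rw [AddMonoidHom.mem_ker, happ, QuotientAddGroup.eq_zero_iff]
  refine ⟨ψ, happ, ?_, ?_, hker⟩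
  · intro z
    induction z using QuotientAddGroup.induction_on with
    | H z =>
      rcases eq_or_ne b 0 with hb | hb
      · have ha : a ≠ 0 := by
          intro ha; exact hab (by simp [ha, hb])
        refine ⟨(QuotientAddGroup.mk 0, QuotientAddGroup.mk (-(z / a))), ?_⟩
        rw [happ]
        congr 1
        field_simp
        ring
      · refine ⟨(QuotientAddGroup.mk (z / b), QuotientAddGroup.mk 0), ?_⟩
        rw [happ]
        congr 1
        field_simp
        ring
  · intro u v
    rw [hker]
    constructor
    · intro hm
      rcases AddSubgroup.mem_sup.1 hm with ⟨y, hy, z, hz, hyz⟩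
      rcases hy with ⟨μ₂, hμ₂, rfl⟩
      rcases hz with ⟨μ₁, hμ₁, rfl⟩
      simp only [AddMonoidHom.coe_mulLeft] at hyz
      rcases eq_or_ne b 0 with hb | hb
      · have ha : a ≠ 0 := by
          intro ha; exact hab (by simp [ha, hb])
        refine ⟨(u - μ₁) / a, ?_, ?_⟩
        · have : u - a * ((u - μ₁) / a) = μ₁ := by field_simp; ring
          rw [this]; exact hμ₁
        · have hv : v = -μ₂ := by
            have h' : a * v = a * (-μ₂) := by
              rw [hb] at hyz; linear_combination hyz
            exact mul_left_cancel₀ ha h'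
          rw [hb, zero_mul, sub_zero, hv]
          exact neg_mem hμ₂
      · have key : b * (u - μ₁) = a * (v + μ₂) := by linear_combination -hyz
        refine ⟨(v + μ₂) / b, ?_, ?_⟩
        · have hat : a * ((v + μ₂) / b) = u - μ₁ := by
            rw [← mul_div_assoc, div_eq_iff hb]
            linear_combination -key
          rw [hat]
          have : u - (u - μ₁) = μ₁ := by ring
          rw [this]; exact hμ₁
        · have : v - b * ((v + μ₂) / b) = -μ₂ := by field_simp; ring
          rw [this]; exact neg_mem hμ₂
    · rintro ⟨t, h₁, h₂⟩
      have : b * u - a * v = a * (-(v - b * t)) + b * (u - a * t) := by ring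
      rw [this]
      exact AddSubgroup.mem_sup.2 ⟨_, ⟨_, neg_mem h₂, rfl⟩, _, ⟨_, h₁, rfl⟩, rfl⟩
end

section
/- Let O be the ring of integers of an imaginary quadratic field of class number one, m a positive integer, O_m = Z + mO, and let ξ, η ∈ O be relatively prime with (ξ,η) ≠ (0,0). Then the lattice ξ·O_m + η·O_m contains m·O, and ξ·O_m + η·O_m = (ξZ + ηZ) + m·ω(ξZ + ηZ), where O = Z + ωZ. -/
/-- `ω_{-d}`: the standard generator of the ring of integers of `ℚ(√-d)`. -/
noncomputable def omegaD (d : ℕ) : ℂ :=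
  if d % 4 = 3 then (1 + Real.sqrt d * Complex.I) / 2 else Real.sqrt d * Complex.I

/-- The ring of integers `O = ℤ + ω_{-d}ℤ` of `ℚ(√-d)`, as an additive subgroup of `ℂ`. -/
noncomputable def ringO (d : ℕ) : AddSubgroup ℂ :=
  AddSubgroup.closure {1, omegaD d}

/-- The order `O_m = ℤ + m·O = ℤ + m·ω_{-d}ℤ` of conductor `m`. -/
noncomputable def orderO (d m : ℕ) : AddSubgroup ℂ :=
  AddSubgroup.closure {1, (m : ℂ) * omegaD d}
lemma one_mem_ringO (d : ℕ) : (1 : ℂ) ∈ ringO d :=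
  AddSubgroup.subset_closure (by simp)

lemma omega_mem_ringO (d : ℕ) : omegaD d ∈ ringO d :=
  AddSubgroup.subset_closure (by simp)

lemma one_mem_orderO (d m : ℕ) : (1 : ℂ) ∈ orderO d m :=
  AddSubgroup.subset_closure (by simp)

lemma momega_mem_orderO (d m : ℕ) : (m : ℂ) * omegaD d ∈ orderO d m :=
  AddSubgroup.subset_closure (by simp)

lemma int_mul_mem {S : AddSubgroup ℂ} (n : ℤ) {x : ℂ} (hx : x ∈ S) : (n : ℂ) * x ∈ S := by
  simpa [zsmul_eq_mul] using S.zsmul_mem hx n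

lemma omegaD_sq (d : ℕ) : omegaD d ^ 2 =
    if d % 4 = 3 then omegaD d - (((d + 1) / 4 : ℕ) : ℂ) else -(d : ℂ) := by
  have hs : (Real.sqrt d : ℂ) ^ 2 = (d : ℂ) := by
    rw [← Complex.ofReal_pow, Real.sq_sqrt (Nat.cast_nonneg d)]; simp
  unfold omegaD
  split_ifs with h
  · have h4 : ((4 * ((d + 1) / 4) : ℕ) : ℂ) = (d : ℂ) + 1 := by
      rw [Nat.mul_div_cancel' (by omega : 4 ∣ d + 1)]; push_cast; ring
    have : (4 : ℂ) * (((d + 1) / 4 : ℕ) : ℂ) = (d : ℂ) + 1 := by push_cast at h4 ⊢; linear_combination h4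
    have hI : ((Real.sqrt d : ℂ) * Complex.I) ^ 2 = -(d : ℂ) := by
      rw [mul_pow, hs, Complex.I_sq]; ring
    linear_combination hI / 4 + this / 4
  · rw [mul_pow, hs, Complex.I_sq]; ring

lemma momega_sq_mem_orderO (d m : ℕ) :
    (m : ℂ) * omegaD d * omegaD d ∈ orderO d m := by
  have h := omegaD_sq d
  split_ifs at h with h3
  · have : (m : ℂ) * omegaD d * omegaD d
        = (m : ℂ) * omegaD d - (((m * ((d + 1) / 4) : ℕ) : ℤ) : ℂ) * 1 := by
      rw [Int.cast_natCast, Nat.cast_mul]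
      linear_combination (m : ℂ) * h
    rw [this]
    exact AddSubgroup.sub_mem _ (momega_mem_orderO d m)
      (int_mul_mem _ (one_mem_orderO d m))
  · have : (m : ℂ) * omegaD d * omegaD d = ((-(m * d) : ℤ) : ℂ) * 1 := by
      push_cast
      linear_combination (m : ℂ) * h
    rw [this]
    exact int_mul_mem _ (one_mem_orderO d m)

lemma omega_mul_mem_ringO (d : ℕ) {b : ℂ} (hb : b ∈ ringO d) :
    omegaD d * b ∈ ringO d := by
  induction hb using AddSubgroup.closure_induction with
  | mem x hx =>
    rcases hx with rfl | rfl
    · simpa using omega_mem_ringO d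
    · have h := omegaD_sq d
      have h2 : omegaD d * omegaD d = omegaD d ^ 2 := by ring
      rw [h2, h]
      split_ifs with h3
      · exact AddSubgroup.sub_mem _ (omega_mem_ringO d)
          (by have := int_mul_mem (((d+1)/4 : ℕ) : ℤ) (one_mem_ringO d); rw [Int.cast_natCast, mul_one] at this; exact this)
      · simpa using int_mul_mem (-(d : ℤ)) (one_mem_ringO d)
  | zero => simpa using AddSubgroup.zero_mem _
  | add x y _ _ hx hy => rw [mul_add]; exact AddSubgroup.add_mem _ hx hy
  | neg x _ hx => rw [mul_neg]; exact AddSubgroup.neg_mem _ hx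

lemma mul_mem_ringO (d : ℕ) {a b : ℂ} (ha : a ∈ ringO d) (hb : b ∈ ringO d) :
    a * b ∈ ringO d := by
  induction ha using AddSubgroup.closure_induction with
  | mem x hx =>
    rcases hx with rfl | rfl
    · simpa using hb
    · exact omega_mul_mem_ringO d hb
  | zero => simpa using AddSubgroup.zero_mem _
  | add x y _ _ hx hy => rw [add_mul]; exact AddSubgroup.add_mem _ hx hy
  | neg x _ hx => rw [neg_mul]; exact AddSubgroup.neg_mem _ hx

lemma m_mul_mem_orderO (d m : ℕ) {z : ℂ} (hz : z ∈ ringO d) :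
    (m : ℂ) * z ∈ orderO d m := by
  induction hz using AddSubgroup.closure_induction with
  | mem x hx =>
    rcases hx with rfl | rfl
    · simpa using int_mul_mem (m : ℤ) (one_mem_orderO d m)
    · exact momega_mem_orderO d m
  | zero => simpa using AddSubgroup.zero_mem _
  | add x y _ _ hx hy => rw [mul_add]; exact AddSubgroup.add_mem _ hx hy
  | neg x _ hx => rw [mul_neg]; exact AddSubgroup.neg_mem _ hx

/-- for relatively prime `ξ, η ∈ O` (class number one), the lattice
`ξ·O_m + η·O_m` contains `m·O` and equals `(ξℤ + ηℤ) + mω(ξℤ + ηℤ)`. -/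
theorem coprime_order_lattice (d m : ℕ) (hd : 0 < d) (hsq : Squarefree d) (hm : 0 < m)
    (ξ η : ℂ) (hξ : ξ ∈ ringO d) (hη : η ∈ ringO d) (hξη : (ξ, η) ≠ ((0 : ℂ), (0 : ℂ)))
    (hcop : ∃ ξ₀ ∈ ringO d, ∃ η₀ ∈ ringO d, ξ * ξ₀ + η * η₀ = 1) :
    (ringO d).map (AddMonoidHom.mulLeft (m : ℂ))
      ≤ (orderO d m).map (AddMonoidHom.mulLeft ξ) ⊔ (orderO d m).map (AddMonoidHom.mulLeft η) ∧
    (orderO d m).map (AddMonoidHom.mulLeft ξ) ⊔ (orderO d m).map (AddMonoidHom.mulLeft η)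
      = (AddSubgroup.zmultiples ξ ⊔ AddSubgroup.zmultiples η)
        ⊔ (AddSubgroup.zmultiples ((m : ℂ) * omegaD d * ξ)
            ⊔ AddSubgroup.zmultiples ((m : ℂ) * omegaD d * η)) := by
  have key : ∀ c : ℂ, (orderO d m).map (AddMonoidHom.mulLeft c)
      = AddSubgroup.zmultiples c ⊔ AddSubgroup.zmultiples ((m : ℂ) * omegaD d * c) := by
    intro c
    rw [orderO, AddMonoidHom.map_closure, Set.image_pair]
    have h1 : (AddMonoidHom.mulLeft c) (1 : ℂ) = c := by simp
    have h2 : (AddMonoidHom.mulLeft c) ((m : ℂ) * omegaD d) = (m : ℂ) * omegaD d * c := by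
      simp [mul_comm]
    rw [h1, h2,
      show ({c, (m : ℂ) * omegaD d * c} : Set ℂ) = {c} ∪ {(m : ℂ) * omegaD d * c} from rfl,
      AddSubgroup.closure_union, ← AddSubgroup.zmultiples_eq_closure,
      ← AddSubgroup.zmultiples_eq_closure]
  constructor
  · rintro x ⟨z, hz, rfl⟩
    obtain ⟨ξ₀, hξ₀, η₀, hη₀, hsum⟩ := hcop
    have hx1 : ξ * ((m : ℂ) * (ξ₀ * z)) ∈ (orderO d m).map (AddMonoidHom.mulLeft ξ) :=
      ⟨(m : ℂ) * (ξ₀ * z), m_mul_mem_orderO d m (mul_mem_ringO d hξ₀ hz), rfl⟩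
    have hx2 : η * ((m : ℂ) * (η₀ * z)) ∈ (orderO d m).map (AddMonoidHom.mulLeft η) :=
      ⟨(m : ℂ) * (η₀ * z), m_mul_mem_orderO d m (mul_mem_ringO d hη₀ hz), rfl⟩
    have heq : (AddMonoidHom.mulLeft (m : ℂ)) z
        = ξ * ((m : ℂ) * (ξ₀ * z)) + η * ((m : ℂ) * (η₀ * z)) := by
      show (m : ℂ) * z = _
      linear_combination (-(m : ℂ) * z) * hsum
    rw [heq]
    exact AddSubgroup.add_mem _
      ((le_sup_left : _ ≤ _ ⊔ (orderO d m).map (AddMonoidHom.mulLeft η)) hx1)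
      ((le_sup_right : _ ≤ (orderO d m).map (AddMonoidHom.mulLeft ξ) ⊔ _) hx2)
  · rw [key, key, sup_sup_sup_comm]
end

section
/- Let O = Z + ωZ with ω = e^{πi/3} be the Eisenstein integers, m a positive integer, O_m = Z + mO, α ∈ O nonzero with coordinates α = x(α) + ω·y(α). Then the index [O : O_m + αO_m] equals gcd(y(α), m), and the index [O : O_m + ωαO_m] equals gcd(x(α)+y(α), m). -/
lemma omega3_sq : omegaD 3 * omegaD 3 = omegaD 3 - 1 := by
  have h3 : (Real.sqrt 3 : ℂ) * Real.sqrt 3 = 3 := by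
    norm_cast; exact Real.mul_self_sqrt (by norm_num)
  simp only [omegaD, if_pos (by norm_num : 3 % 4 = 3)]
  push_cast
  linear_combination (Complex.I^2/4) * h3 + (3/4:ℂ) * Complex.I_sq

/-- The coordinate map `(a, b) ↦ a + ωb` for the Eisenstein integers. -/
noncomputable def fEis : ℤ × ℤ →+ ℂ where
  toFun p := (p.1 : ℂ) + omegaD 3 * (p.2 : ℂ)
  map_zero' := by simp
  map_add' p q := by simp only [Prod.fst_add, Prod.snd_add]; push_cast; ring

lemma fEis_apply (a b : ℤ) : fEis (a, b) = (a : ℂ) + omegaD 3 * b := rfl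

lemma fEis_inj : Function.Injective fEis := by
  rw [injective_iff_map_eq_zero]
  rintro ⟨a, b⟩ h
  rw [fEis_apply] at h
  simp only [omegaD, if_pos (by norm_num : 3 % 4 = 3), ↓reduceIte, Complex.ext_iff, Complex.add_re,
    Complex.add_im, Complex.zero_re, Complex.zero_im, Complex.div_re, Complex.div_im,
    Complex.mul_re, Complex.mul_im, Complex.add_re, Complex.one_re, Complex.one_im,
    Complex.I_re, Complex.I_im, Complex.intCast_re, Complex.intCast_im,
    Complex.ofReal_re, Complex.ofReal_im] at h
  obtain ⟨h1, h2⟩ := h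
  field_simp at h2
  have hs : Real.sqrt 3 ≠ 0 := ne_of_gt (Real.sqrt_pos.mpr (by norm_num))
  have hb : (b:ℝ) = 0 := by norm_num at h2; exact_mod_cast h2
  have hb0 : b = 0 := by exact_mod_cast hb
  subst hb0
  have ha : a = 0 := by
    have : (a:ℝ) = 0 := by simpa using h1
    exact_mod_cast this
  simp [ha]

lemma closure_eq_prod (m : ℕ) (u v p q : ℤ) (hq : (Int.gcd v m : ℤ) ∣ q) :
    AddSubgroup.closure {((1:ℤ),(0:ℤ)), (0,(m:ℤ)), (u,v), (p,q)}
      = (⊤ : AddSubgroup ℤ).prod (AddSubgroup.zmultiples (Int.gcd v m : ℤ)) := by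
  set g : ℤ := (Int.gcd v m : ℤ) with hg
  set S : Set (ℤ × ℤ) := {((1:ℤ),(0:ℤ)), (0,(m:ℤ)), (u,v), (p,q)} with hS
  apply le_antisymm
  · rw [AddSubgroup.closure_le]
    rintro z hz
    simp only [hS, Set.mem_insert_iff, Set.mem_singleton_iff] at hz
    rcases hz with rfl | rfl | rfl | rfl <;>
      refine AddSubgroup.mem_prod.mpr ⟨trivial, Int.mem_zmultiples_iff.mpr ?_⟩
    · exact dvd_zero g
    · exact Int.gcd_dvd_right _ _
    · exact Int.gcd_dvd_left _ _
    · exact hq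
  · rintro ⟨a, b⟩ hz
    rw [AddSubgroup.mem_prod] at hz
    obtain ⟨-, hb⟩ := hz
    obtain ⟨k, hk⟩ := Int.mem_zmultiples_iff.mp hb
    have h1 : ((1:ℤ),(0:ℤ)) ∈ AddSubgroup.closure S := AddSubgroup.subset_closure (by simp [hS])
    have h2 : ((0:ℤ),(m:ℤ)) ∈ AddSubgroup.closure S := AddSubgroup.subset_closure (by simp [hS])
    have h3 : ((u,v) : ℤ×ℤ) ∈ AddSubgroup.closure S := AddSubgroup.subset_closure (by simp [hS])
    have h0v : (((0:ℤ), v) : ℤ×ℤ) ∈ AddSubgroup.closure S := by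
      have hmem := sub_mem h3 (zsmul_mem h1 u)
      have : (((0:ℤ), v) : ℤ×ℤ) = (u,v) - u • ((1:ℤ),(0:ℤ)) := by
        ext <;> simp
      rwa [this]
    have h0g : (((0:ℤ), g) : ℤ×ℤ) ∈ AddSubgroup.closure S := by
      have hmem := add_mem (zsmul_mem h0v (Int.gcdA v m)) (zsmul_mem h2 (Int.gcdB v m))
      have : (((0:ℤ), g) : ℤ×ℤ)
          = Int.gcdA v m • ((0:ℤ), v) + Int.gcdB v m • ((0:ℤ),(m:ℤ)) := by
        ext
        · simp
        · simp only [Prod.snd_add, Prod.smul_snd, smul_eq_mul]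
          linarith [Int.gcd_eq_gcd_ab v m]
      rwa [this]
    have : ((a, b) : ℤ×ℤ) = a • ((1:ℤ),(0:ℤ)) + k • ((0:ℤ), g) := by
      ext
      · simp
      · simp only [Prod.snd_add, Prod.smul_snd, smul_eq_mul]
        linarith [hk]
    rw [this]
    exact add_mem (zsmul_mem h1 a) (zsmul_mem h0g k)

lemma index_prod_zmult (g : ℕ) :
    ((⊤ : AddSubgroup ℤ).prod (AddSubgroup.zmultiples (g:ℤ))).index = g := by
  rw [AddSubgroup.index_prod, AddSubgroup.index_top, one_mul, Int.index_zmultiples,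
    Int.natAbs_natCast]

lemma ringO3_eq_map_top : ringO 3 = AddSubgroup.map fEis ⊤ := by
  have htop : (⊤ : AddSubgroup (ℤ×ℤ))
      = AddSubgroup.closure {((1:ℤ),(0:ℤ)), ((0:ℤ),(1:ℤ))} := by
    refine le_antisymm ?_ le_top
    rintro ⟨a, b⟩ -
    have h1 : ((1:ℤ),(0:ℤ)) ∈ AddSubgroup.closure {((1:ℤ),(0:ℤ)), ((0:ℤ),(1:ℤ))} :=
      AddSubgroup.subset_closure (by simp)
    have h2 : ((0:ℤ),(1:ℤ)) ∈ AddSubgroup.closure {((1:ℤ),(0:ℤ)), ((0:ℤ),(1:ℤ))} :=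
      AddSubgroup.subset_closure (by simp)
    have : ((a, b) : ℤ×ℤ) = a • ((1:ℤ),(0:ℤ)) + b • ((0:ℤ),(1:ℤ)) := by
      ext <;> simp
    rw [this]
    exact add_mem (zsmul_mem h1 a) (zsmul_mem h2 b)
  rw [ringO, htop, AddMonoidHom.map_closure]
  congr 1
  rw [Set.image_insert_eq, Set.image_singleton]
  have e1 : fEis (1,0) = 1 := by rw [fEis_apply]; push_cast; ring
  have e2 : fEis (0,1) = omegaD 3 := by rw [fEis_apply]; push_cast; ring
  rw [e1, e2]

lemma main_aux (m : ℕ) (u v p q : ℤ) (β : ℂ)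
    (h3 : fEis (u, v) = β) (h4 : fEis (p, q) = β * ((m:ℂ) * omegaD 3))
    (hq : (Int.gcd v m : ℤ) ∣ q) :
    ((orderO 3 m) ⊔ (orderO 3 m).map (AddMonoidHom.mulLeft β)).relIndex (ringO 3)
      = Int.gcd v m := by
  have e1 : fEis (1,0) = 1 := by rw [fEis_apply]; push_cast; ring
  have e2 : fEis (0,(m:ℤ)) = (m:ℂ) * omegaD 3 := by rw [fEis_apply]; push_cast; ring
  have hmap : (orderO 3 m).map (AddMonoidHom.mulLeft β)
      = AddSubgroup.closure {β, β * ((m:ℂ) * omegaD 3)} := by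
    rw [orderO, AddMonoidHom.map_closure]
    congr 1
    rw [Set.image_insert_eq, Set.image_singleton]
    simp [AddMonoidHom.mulLeft]
  have hsup : (orderO 3 m) ⊔ (orderO 3 m).map (AddMonoidHom.mulLeft β)
      = AddSubgroup.map fEis
          (AddSubgroup.closure {((1:ℤ),(0:ℤ)), (0,(m:ℤ)), (u,v), (p,q)}) := by
    rw [hmap, orderO, ← AddSubgroup.closure_union, AddMonoidHom.map_closure]
    congr 1
    rw [Set.image_insert_eq, Set.image_insert_eq, Set.image_insert_eq, Set.image_singleton,
      e1, e2, h3, h4, Set.insert_union, Set.singleton_union]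
  rw [hsup, ringO3_eq_map_top, ← AddSubgroup.relIndex_comap,
    AddSubgroup.comap_map_eq_self_of_injective fEis_inj, AddSubgroup.relIndex_top_right,
    closure_eq_prod m u v p q hq, index_prod_zmult]

/-- for the Eisenstein integers `O = ℤ + ωℤ`, `ω = e^{πi/3}`, and nonzero
`α = x + ωy ∈ O`: `[O : O_m + αO_m] = gcd(y, m)` and `[O : O_m + ωαO_m] = gcd(x+y, m)`. -/
theorem components_of_pullback_of_diagonals (m : ℕ) (hm : 0 < m) (x y : ℤ) (α : ℂ)
    (hαdef : α = (x : ℂ) + omegaD 3 * (y : ℂ)) (hα0 : α ≠ 0) :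
    ((orderO 3 m) ⊔ (orderO 3 m).map (AddMonoidHom.mulLeft α)).relIndex (ringO 3)
      = Int.gcd y m ∧
    ((orderO 3 m) ⊔ (orderO 3 m).map (AddMonoidHom.mulLeft (omegaD 3 * α))).relIndex (ringO 3)
      = Int.gcd (x + y) m := by
  constructor
  · refine main_aux m x y (-(m:ℤ)*y) ((m:ℤ)*(x+y)) α ?_ ?_ ?_
    · rw [fEis_apply, hαdef]
    · rw [fEis_apply, hαdef]
      push_cast
      linear_combination (-(m:ℂ)*y) * omega3_sq
    · exact (Int.gcd_dvd_right _ _).mul_right (x+y)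
  · refine main_aux m (-y) (x+y) (-(m:ℤ)*(x+y)) ((m:ℤ)*x) (omegaD 3 * α) ?_ ?_ ?_
    · rw [fEis_apply, hαdef]
      push_cast
      linear_combination (-(y:ℂ)) * omega3_sq
    · rw [fEis_apply, hαdef]
      push_cast
      linear_combination (-(m:ℂ)*x - (m:ℂ)*y*(omegaD 3 + 1)) * omega3_sq
    · exact (Int.gcd_dvd_right _ _).mul_right x
end

section
/- Let O be the Eisenstein integers, m a positive integer, O_m = Z + mO, α ∈ O nonzero with coordinates x(α), y(α) ∈ Z. Then the total number of irreducible components of the pullback of Hirzebruch's elliptic configuration D = E(1,0) + E(0,1) + E(1,1) + E(1, e^{πi/3}) under the isogeny diag(α,1) : (C/O_m)² → (C/O)² equals m + m|α|² + gcd(y(α),m) + gcd(x(α)+y(α),m). -/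
namespace Aux14

lemma mem_closure_pair {G : Type*} [AddCommGroup G] (u v : G) (a b : ℤ) :
    a • u + b • v ∈ AddSubgroup.closure ({u, v} : Set G) :=
  add_mem (zsmul_mem (AddSubgroup.subset_closure (by simp)) a)
    (zsmul_mem (AddSubgroup.subset_closure (by simp)) b)

lemma closure_pair_le_iff {G : Type*} [AddGroup G] {u v : G} {H : AddSubgroup G} :
    AddSubgroup.closure {u, v} ≤ H ↔ u ∈ H ∧ v ∈ H := by
  rw [AddSubgroup.closure_le, Set.insert_subset_iff, Set.singleton_subset_iff]
  rfl

lemma closure_pair_sub_smul {G : Type*} [AddCommGroup G] (u v : G) (q : ℤ) :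
    AddSubgroup.closure ({u, v} : Set G) = AddSubgroup.closure {u - q • v, v} := by
  apply le_antisymm
  · rw [closure_pair_le_iff]
    constructor
    · have : u = (u - q • v) + q • v := by abel
      rw [this]
      exact add_mem (AddSubgroup.subset_closure (by simp))
        (zsmul_mem (AddSubgroup.subset_closure (by simp)) q)
    · exact AddSubgroup.subset_closure (by simp)
  · rw [closure_pair_le_iff]
    exact ⟨sub_mem (AddSubgroup.subset_closure (by simp))
      (zsmul_mem (AddSubgroup.subset_closure (by simp)) q),
      AddSubgroup.subset_closure (by simp)⟩

lemma tri1 (c d : ℤ) : (AddSubgroup.closure {((1:ℤ), c), ((0:ℤ), d)}).index = d.natAbs := by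
  set n := d.natAbs with hn
  let φ : ℤ × ℤ →+ ZMod n :=
    AddMonoidHom.mk' (fun p => ((p.2 - c * p.1 : ℤ) : ZMod n))
      (by intro p q; simp only [Prod.fst_add, Prod.snd_add]; push_cast; ring)
  have hφ : ∀ p : ℤ × ℤ, φ p = ((p.2 - c * p.1 : ℤ) : ZMod n) := fun p => rfl
  have hdvd : (n : ℤ) ∣ d := by rw [hn]; exact Int.natAbs_dvd.mpr dvd_rfl
  have hker : φ.ker = AddSubgroup.closure {((1:ℤ), c), ((0:ℤ), d)} := by
    apply le_antisymm
    · intro p hp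
      rw [AddMonoidHom.mem_ker, hφ, ZMod.intCast_zmod_eq_zero_iff_dvd] at hp
      have hd : d ∣ p.2 - c * p.1 := by
        rw [hn] at hp
        exact Int.natAbs_dvd.mp (by exact_mod_cast hp)
      obtain ⟨k, hk⟩ := hd
      have hp' : p = p.1 • ((1:ℤ), c) + k • ((0:ℤ), d) := by
        rw [Prod.ext_iff]
        constructor
        · simp
        · simp only [Prod.snd_add, Prod.smul_mk, smul_eq_mul]
          linarith
      rw [hp']
      exact mem_closure_pair _ _ _ _
    · rw [closure_pair_le_iff]
      constructor
      · rw [AddMonoidHom.mem_ker, hφ]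
        norm_num
      · rw [AddMonoidHom.mem_ker, hφ]
        simp only [mul_zero, sub_zero]
        rw [ZMod.intCast_zmod_eq_zero_iff_dvd]
        exact_mod_cast hdvd
  have hsurj : Function.Surjective φ := by
    intro z
    obtain ⟨t, ht⟩ := ZMod.intCast_surjective (n := n) z
    exact ⟨(0, t), by rw [hφ]; simpa using ht⟩
  rw [← hker, AddSubgroup.index_ker, AddMonoidHom.range_eq_top_of_surjective φ hsurj]
  rw [Nat.card_congr AddSubgroup.topEquiv.toEquiv, Nat.card_zmod]

lemma tri (a c d : ℤ) (ha : a ≠ 0) :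
    (AddSubgroup.closure {((a:ℤ), c), ((0:ℤ), d)}).index = a.natAbs * d.natAbs := by
  let j : ℤ × ℤ →+ ℤ × ℤ :=
    AddMonoidHom.mk' (fun p => (a * p.1, p.2))
      (by intro p q; simp only [Prod.fst_add, Prod.snd_add, Prod.mk_add_mk, Prod.mk.injEq]
          exact ⟨by ring, trivial⟩)
  have hj : ∀ p : ℤ × ℤ, j p = (a * p.1, p.2) := fun p => rfl
  have hjinj : Function.Injective j := by
    intro p q h
    rw [hj, hj, Prod.ext_iff] at h
    obtain ⟨h1, h2⟩ := h
    have : p.1 = q.1 := mul_left_cancel₀ ha h1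
    exact Prod.ext this h2
  have hmap : AddSubgroup.map j (AddSubgroup.closure {((1:ℤ), c), ((0:ℤ), d)})
      = AddSubgroup.closure {((a:ℤ), c), ((0:ℤ), d)} := by
    rw [AddMonoidHom.map_closure, Set.image_pair, hj, hj]
    norm_num
  have hle : AddSubgroup.closure {((a:ℤ), c), ((0:ℤ), d)} ≤ j.range := by
    rw [← hmap, AddMonoidHom.range_eq_map]
    exact AddSubgroup.map_mono le_top
  have hKindex : j.range.index = a.natAbs := by
    have hcom : j.range = AddSubgroup.comap (AddMonoidHom.fst ℤ ℤ) (AddSubgroup.zmultiples a) := by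
      ext p
      simp only [AddMonoidHom.mem_range, AddSubgroup.mem_comap, AddMonoidHom.coe_fst,
        AddSubgroup.mem_zmultiples_iff, smul_eq_mul]
      constructor
      · rintro ⟨q, rfl⟩
        exact ⟨q.1, by rw [hj]; ring⟩
      · rintro ⟨k, hk⟩
        exact ⟨(k, p.2), by rw [hj]; exact Prod.ext (by dsimp; linarith [hk]) rfl⟩
    rw [hcom, AddSubgroup.index_comap]
    have hrtop : (AddMonoidHom.fst ℤ ℤ).range = ⊤ :=
      AddMonoidHom.range_eq_top_of_surjective _ (fun z => ⟨(z, 0), rfl⟩)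
    rw [hrtop, AddSubgroup.relIndex_top_right, Int.index_zmultiples]
  have hrel : (AddSubgroup.closure {((a:ℤ), c), ((0:ℤ), d)}).relIndex j.range = d.natAbs := by
    have h1 := AddSubgroup.relIndex_comap
      (H := AddSubgroup.closure {((a:ℤ), c), ((0:ℤ), d)}) j ⊤
    rw [← AddMonoidHom.range_eq_map, ← hmap,
      AddSubgroup.comap_map_eq_self_of_injective hjinj,
      AddSubgroup.relIndex_top_right, tri1, hmap] at h1
    exact h1.symm
  rw [← AddSubgroup.relIndex_mul_index hle, hrel, hKindex, mul_comm]

lemma det_index_aux (n : ℕ) : ∀ v w : ℤ × ℤ, w.1.natAbs = n → v.1 * w.2 - v.2 * w.1 ≠ 0 →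
    (AddSubgroup.closure {v, w}).index = (v.1 * w.2 - v.2 * w.1).natAbs := by
  induction n using Nat.strong_induction_on with
  | _ n ih =>
    rintro ⟨v1, v2⟩ ⟨w1, w2⟩ hn hdet
    simp only at hn hdet ⊢
    rcases eq_or_ne w1 0 with rfl | h0
    · have ha : v1 ≠ 0 := by
        intro h
        apply hdet
        rw [h]; ring
      rw [tri v1 v2 w2 ha, show v1 * w2 - v2 * 0 = v1 * w2 by ring, Int.natAbs_mul]
    · set q := v1 / w1 with hq
      have hsub : ((v1, v2) : ℤ × ℤ) - q • (w1, w2) = (v1 - q * w1, v2 - q * w2) := by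
        simp [Prod.ext_iff]
      have h1 : AddSubgroup.closure {((v1, v2) : ℤ × ℤ), (w1, w2)}
          = AddSubgroup.closure {((w1, w2) : ℤ × ℤ), (v1 - q * w1, v2 - q * w2)} := by
        rw [closure_pair_sub_smul (((v1, v2)) : ℤ × ℤ) (w1, w2) q, hsub, Set.pair_comm]
      have hr : v1 - q * w1 = v1 % w1 := by
        rw [hq, Int.emod_def]; ring
      have hlt : (v1 - q * w1).natAbs < n := by
        rw [hr, ← hn]
        have h1 := Int.emod_nonneg v1 h0
        have h2 := Int.emod_lt v1 h0
        omega
      have hdet' : w1 * (v2 - q * w2) - w2 * (v1 - q * w1) ≠ 0 := by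
        intro h
        apply hdet
        linear_combination -h
      rw [h1, ih _ hlt (w1, w2) (v1 - q * w1, v2 - q * w2) rfl hdet']
      have : w1 * (v2 - q * w2) - w2 * (v1 - q * w1) = -(v1 * w2 - v2 * w1) := by ring
      rw [this, Int.natAbs_neg]

lemma det_index (v w : ℤ × ℤ) (hdet : v.1 * w.2 - v.2 * w.1 ≠ 0) :
    (AddSubgroup.closure {v, w}).index = (v.1 * w.2 - v.2 * w.1).natAbs :=
  det_index_aux w.1.natAbs v w rfl hdet

noncomputable def fh (ω : ℂ) : ℤ × ℤ →+ ℂ :=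
  AddMonoidHom.mk' (fun p => (p.1 : ℂ) + (p.2 : ℂ) * ω)
    (by intro p q; simp only [Prod.fst_add, Prod.snd_add]; push_cast; ring)

@[simp] lemma fh_apply (ω : ℂ) (p : ℤ × ℤ) : fh ω p = (p.1 : ℂ) + (p.2 : ℂ) * ω := rfl

def Mh (a b : ℤ) : ℤ × ℤ →+ ℤ × ℤ :=
  AddMonoidHom.mk' (fun p => (a * p.1 - b * p.2, b * p.1 + (a + b) * p.2))
    (by intro p q
        simp only [Prod.fst_add, Prod.snd_add, Prod.mk_add_mk, Prod.mk.injEq]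
        constructor <;> ring)

@[simp] lemma Mh_apply (a b : ℤ) (p : ℤ × ℤ) :
    Mh a b p = (a * p.1 - b * p.2, b * p.1 + (a + b) * p.2) := rfl

lemma homega : omegaD 3 = (1 + (Real.sqrt 3 : ℂ) * Complex.I) / 2 := by
  norm_num [omegaD]

lemma homega_sq : (omegaD 3) ^ 2 = omegaD 3 - 1 := by
  have hs3 : ((Real.sqrt 3 : ℝ) : ℂ) ^ 2 = 3 := by
    rw [← Complex.ofReal_pow, Real.sq_sqrt (by norm_num : (3:ℝ) ≥ 0)]
    norm_num
  rw [homega]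
  have hI := Complex.I_sq
  linear_combination (Complex.I ^ 2 / 4) * hs3 + (3 / 4) * hI

lemma fh_comp (a b : ℤ) :
    (fh (omegaD 3)).comp (Mh a b)
      = (AddMonoidHom.mulLeft ((a : ℂ) + omegaD 3 * (b : ℂ))).comp (fh (omegaD 3)) := by
  apply AddMonoidHom.ext
  intro p
  simp only [AddMonoidHom.coe_comp, Function.comp_apply, fh_apply, Mh_apply,
    AddMonoidHom.coe_mulLeft]
  push_cast
  linear_combination (-(b : ℂ) * (p.2 : ℂ)) * homega_sq

lemma fh_inj : Function.Injective (fh (omegaD 3)) := by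
  rw [injective_iff_map_eq_zero]
  intro p hp
  rw [fh_apply, homega] at hp
  have h2 : ((p.1 + p.2 / 2 : ℝ) : ℂ) + ((p.2 * (Real.sqrt 3 / 2) : ℝ) : ℂ) * Complex.I = 0 := by
    push_cast
    linear_combination hp
  rw [Complex.ext_iff] at h2
  simp only [Complex.add_re, Complex.ofReal_re, Complex.mul_re, Complex.I_re, Complex.I_im,
    Complex.ofReal_im, Complex.add_im, Complex.mul_im, Complex.zero_re, Complex.zero_im] at h2
  obtain ⟨hre, him⟩ := h2
  have hs3 : Real.sqrt 3 ≠ 0 := by positivity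
  have hp2 : (p.2 : ℝ) = 0 := by
    field_simp at him
    rcases mul_eq_zero.mp (by linarith : (p.2:ℝ) * Real.sqrt 3 = 0) with h | h
    · exact h
    · exact absurd h hs3
  have hp2' : p.2 = 0 := by exact_mod_cast hp2
  have hp1 : (p.1 : ℝ) = 0 := by rw [hp2] at hre; linarith
  have hp1' : p.1 = 0 := by exact_mod_cast hp1
  exact Prod.ext hp1' hp2'

lemma map_Mh (a b : ℤ) (m : ℕ) :
    AddSubgroup.map (Mh a b) (AddSubgroup.closure {((1:ℤ),(0:ℤ)), ((0:ℤ),(m:ℤ))})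
      = AddSubgroup.closure {((a:ℤ), b), (-(b * m), (a + b) * m)} := by
  rw [AddMonoidHom.map_closure, Set.image_pair]
  norm_num

lemma index_L1 (m : ℕ) (hm : 0 < m) :
    (AddSubgroup.closure {((1:ℤ),(0:ℤ)), ((0:ℤ),(m:ℤ))}).index = m := by
  have h := det_index ((1:ℤ),(0:ℤ)) ((0:ℤ),(m:ℤ)) (by simp; omega)
  simpa using h

lemma index_L2 (a b : ℤ) (m : ℕ) (hm : 0 < m) (hab : ¬(a = 0 ∧ b = 0)) :
    (AddSubgroup.closure {((a:ℤ), b), (-(b * m), (a + b) * m)}).index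
      = ((m : ℤ) * (a ^ 2 + a * b + b ^ 2)).natAbs := by
  have hq : (0:ℤ) < a ^ 2 + a * b + b ^ 2 := by
    rcases eq_or_ne b 0 with rfl | hb
    · have ha : a ≠ 0 := by tauto
      have : (0:ℤ) < a ^ 2 := by positivity
      nlinarith
    · have : (0:ℤ) < b ^ 2 := by positivity
      nlinarith [sq_nonneg (2 * a + b)]
  have hdet : ((a:ℤ), b).1 * ((-(b * m), (a + b) * m) : ℤ × ℤ).2
      - ((a:ℤ), b).2 * ((-(b * m), (a + b) * m) : ℤ × ℤ).1 = (m : ℤ) * (a ^ 2 + a * b + b ^ 2) := by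
    simp; ring
  have h := det_index ((a:ℤ), b) (-(b * m), (a + b) * m) (by rw [hdet]; positivity)
  rw [hdet] at h
  exact h

lemma sup_eq (a b : ℤ) (m : ℕ) :
    AddSubgroup.closure {((1:ℤ),(0:ℤ)), ((0:ℤ),(m:ℤ))}
      ⊔ AddSubgroup.map (Mh a b) (AddSubgroup.closure {((1:ℤ),(0:ℤ)), ((0:ℤ),(m:ℤ))})
    = AddSubgroup.closure {((1:ℤ),(0:ℤ)), ((0:ℤ), (Int.gcd b m : ℤ))} := by
  rw [map_Mh, ← AddSubgroup.closure_union]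
  set g : ℤ := (Int.gcd b m : ℤ) with hg
  have memg : ∀ a' b' : ℤ, g ∣ b' →
      (a', b') ∈ AddSubgroup.closure {((1:ℤ),(0:ℤ)), ((0:ℤ), g)} := by
    rintro a' b' ⟨k, rfl⟩
    have : ((a' : ℤ), g * k) = a' • ((1:ℤ),(0:ℤ)) + k • ((0:ℤ), g) := by
      simp [Prod.ext_iff, mul_comm]
    rw [this]
    exact mem_closure_pair _ _ _ _
  have hgb : g ∣ b := Int.gcd_dvd_left b m
  have hgm : g ∣ (m : ℤ) := Int.gcd_dvd_right b m
  apply le_antisymm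
  · rw [AddSubgroup.closure_le]
    rintro p hp
    simp only [Set.mem_union, Set.mem_insert_iff, Set.mem_singleton_iff] at hp
    rcases hp with (rfl | rfl) | (rfl | rfl)
    · exact memg 1 0 (dvd_zero g)
    · exact memg 0 m hgm
    · exact memg a b hgb
    · exact memg _ _ (Dvd.dvd.mul_left hgm (a + b))
  · rw [closure_pair_le_iff]
    constructor
    · exact AddSubgroup.subset_closure (by simp)
    · have h0b : ((0:ℤ), b) ∈ AddSubgroup.closure
          ({((1:ℤ),(0:ℤ)), ((0:ℤ),(m:ℤ))} ∪ {((a:ℤ), b), (-(b * m), (a + b) * m)}) := by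
        have heq : ((0:ℤ), b) = ((a:ℤ), b) - a • ((1:ℤ),(0:ℤ)) := by
          simp [Prod.ext_iff]
        rw [heq]
        exact sub_mem (AddSubgroup.subset_closure (by simp))
          (zsmul_mem (AddSubgroup.subset_closure (by simp)) a)
      have h0m : ((0:ℤ),(m:ℤ)) ∈ AddSubgroup.closure
          ({((1:ℤ),(0:ℤ)), ((0:ℤ),(m:ℤ))} ∪ {((a:ℤ), b), (-(b * m), (a + b) * m)}) :=
        AddSubgroup.subset_closure (by simp)
      have heq : ((0:ℤ), g) = Int.gcdA b m • ((0:ℤ), b) + Int.gcdB b m • ((0:ℤ),(m:ℤ)) := by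
        rw [Prod.ext_iff]
        constructor
        · simp
        · simp only [Prod.snd_add, Prod.smul_mk, smul_eq_mul]
          linear_combination Int.gcd_eq_gcd_ab b (m : ℤ)
      rw [heq]
      exact add_mem (zsmul_mem h0b _) (zsmul_mem h0m _)

lemma index_Lg (b : ℤ) (m : ℕ) (hm : 0 < m) :
    (AddSubgroup.closure {((1:ℤ),(0:ℤ)), ((0:ℤ), (Int.gcd b m : ℤ))}).index = Int.gcd b m := by
  have hm' : (m : ℤ) ≠ 0 := by exact_mod_cast hm.ne'
  have hg : Int.gcd b m ≠ 0 := fun h => hm' (Int.gcd_eq_zero_iff.mp h).2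
  have h := det_index ((1:ℤ),(0:ℤ)) ((0:ℤ), (Int.gcd b m : ℤ))
    (by simp; exact fun _ => by omega)
  simpa using h

end Aux14

/-- the total number of irreducible components of the pullback of
Hirzebruch's configuration `D = E(1,0) + E(0,1) + E(1,1) + E(1, e^{πi/3})` under
`diag(α,1) : (ℂ/O_m)² → (ℂ/O)²` is `m + m|α|² + gcd(y(α),m) + gcd(x(α)+y(α),m)`,
where the component count of the pullback of `E(a,b)` is `[O : a·O_m + b·α·O_m]`. -/
theorem components_of_pullback_of_Hirzebruch_configuration (m : ℕ) (hm : 0 < m)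
    (x y : ℤ) (α : ℂ) (hαdef : α = (x : ℂ) + omegaD 3 * (y : ℂ)) (hα0 : α ≠ 0) :
    ((orderO 3 m).relIndex (ringO 3) : ℝ)
      + (((orderO 3 m).map (AddMonoidHom.mulLeft α)).relIndex (ringO 3) : ℝ)
      + (((orderO 3 m) ⊔ (orderO 3 m).map (AddMonoidHom.mulLeft α)).relIndex (ringO 3) : ℝ)
      + (((orderO 3 m) ⊔ (orderO 3 m).map
            (AddMonoidHom.mulLeft (omegaD 3 * α))).relIndex (ringO 3) : ℝ)
      = m + m * Complex.normSq α + Int.gcd y m + Int.gcd (x + y) m := by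
  have hxy : ¬(x = 0 ∧ y = 0) := by
    rintro ⟨rfl, rfl⟩
    apply hα0
    rw [hαdef]
    norm_num
  set f : ℤ × ℤ →+ ℂ := Aux14.fh (omegaD 3) with hf
  have hfinj : Function.Injective f := Aux14.fh_inj
  have htop : (AddSubgroup.closure {((1:ℤ),(0:ℤ)), ((0:ℤ),(1:ℤ))} : AddSubgroup (ℤ × ℤ)) = ⊤ := by
    rw [eq_top_iff]
    rintro ⟨p1, p2⟩ _
    have : ((p1, p2) : ℤ × ℤ) = p1 • ((1:ℤ),(0:ℤ)) + p2 • ((0:ℤ),(1:ℤ)) := by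
      simp [Prod.ext_iff]
    rw [this]
    exact Aux14.mem_closure_pair _ _ _ _
  have hrange : AddSubgroup.map f ⊤ = ringO 3 := by
    rw [← htop, AddMonoidHom.map_closure, Set.image_pair]
    have e1 : f ((1:ℤ),(0:ℤ)) = 1 := by simp [hf]
    have e2 : f ((0:ℤ),(1:ℤ)) = omegaD 3 := by simp [hf]
    rw [e1, e2, ringO]
  have key : ∀ L : AddSubgroup (ℤ × ℤ),
      (AddSubgroup.map f L).relIndex (ringO 3) = L.index := by
    intro L
    have h1 := AddSubgroup.relIndex_comap (H := AddSubgroup.map f L) f ⊤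
    rw [AddSubgroup.comap_map_eq_self_of_injective hfinj,
      AddSubgroup.relIndex_top_right, hrange] at h1
    exact h1.symm
  have hOm : orderO 3 m
      = AddSubgroup.map f (AddSubgroup.closure {((1:ℤ),(0:ℤ)), ((0:ℤ),(m:ℤ))}) := by
    rw [AddMonoidHom.map_closure, Set.image_pair, orderO]
    have e1 : f ((1:ℤ),(0:ℤ)) = 1 := by simp [hf]
    have e2 : f ((0:ℤ),(m:ℤ)) = (m : ℂ) * omegaD 3 := by simp [hf]
    rw [e1, e2]
  have hMα : (orderO 3 m).map (AddMonoidHom.mulLeft α)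
      = AddSubgroup.map f (AddSubgroup.map (Aux14.Mh x y)
          (AddSubgroup.closure {((1:ℤ),(0:ℤ)), ((0:ℤ),(m:ℤ))})) := by
    rw [hOm, AddSubgroup.map_map, AddSubgroup.map_map, hf, Aux14.fh_comp x y, ← hαdef]
  have hβ : omegaD 3 * α = ((-y : ℤ) : ℂ) + omegaD 3 * ((x + y : ℤ) : ℂ) := by
    rw [hαdef]
    push_cast
    linear_combination (y : ℂ) * Aux14.homega_sq
  have hMβ : (orderO 3 m).map (AddMonoidHom.mulLeft (omegaD 3 * α))
      = AddSubgroup.map f (AddSubgroup.map (Aux14.Mh (-y) (x + y))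
          (AddSubgroup.closure {((1:ℤ),(0:ℤ)), ((0:ℤ),(m:ℤ))})) := by
    rw [hOm, AddSubgroup.map_map, AddSubgroup.map_map, hf, Aux14.fh_comp (-y) (x + y), ← hβ]
  rw [hMα, hMβ, hOm, ← AddSubgroup.map_sup, ← AddSubgroup.map_sup, key, key, key, key,
    Aux14.sup_eq x y m, Aux14.sup_eq (-y) (x + y) m,
    Aux14.index_L1 m hm, Aux14.map_Mh, Aux14.index_L2 x y m hm hxy,
    Aux14.index_Lg y m hm, Aux14.index_Lg (x + y) m hm]
  have hq : (0:ℤ) ≤ (m : ℤ) * (x ^ 2 + x * y + y ^ 2) := by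
    rcases eq_or_ne y 0 with rfl | hb
    · nlinarith [sq_nonneg x]
    · have : (0:ℤ) < y ^ 2 := by positivity
      nlinarith [sq_nonneg (2 * x + y)]
  have hns : Complex.normSq α = (x : ℝ) ^ 2 + (x : ℝ) * (y : ℝ) + (y : ℝ) ^ 2 := by
    have hα' : α = ((x + y / 2 : ℝ) : ℂ) + ((Real.sqrt 3 / 2 * y : ℝ) : ℂ) * Complex.I := by
      rw [hαdef, Aux14.homega]
      push_cast
      ring
    rw [hα', Complex.normSq_add_mul_I]
    have h3 : Real.sqrt 3 ^ 2 = 3 := Real.sq_sqrt (by norm_num)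
    linear_combination ((y : ℝ) ^ 2 / 4) * h3
  have hcast : ((((m : ℤ) * (x ^ 2 + x * y + y ^ 2)).natAbs : ℕ) : ℝ)
      = (m : ℝ) * ((x : ℝ) ^ 2 + (x : ℝ) * (y : ℝ) + (y : ℝ) ^ 2) := by
    have hq0 : (0:ℝ) ≤ ((m : ℤ) : ℝ) * (((x : ℤ) : ℝ) ^ 2 + ((x : ℤ) : ℝ) * ((y : ℤ) : ℝ)
        + ((y : ℤ) : ℝ) ^ 2) := by
      exact_mod_cast hq
    rw [Nat.cast_natAbs]
    push_cast
    push_cast at hq0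
    rw [abs_of_nonneg hq0]
  rw [hns, hcast]
end
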